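/- The exit time of simple random walk from a symmetric interval is stochastically maximized by the unbiased walk: for every p ∈ (0,1), every positive integer k, and every n ∈ ℕ, ℙ(σ_p^k > n) ≤ ℙ(σ_{1/2}^k > n), where σ_p^k is the exit time of the biased random walk with up-step probability p from (-k, k). -/

import Mathlib

open MeasureTheory ProbabilityTheory

/-- The partial-sum (random walk) process associated to a step process `X`. -/
noncomputable def walk {Ω : Type*} (X : ℕ → Ω → ℤ) (n : ℕ) (ω : Ω) : ℤ :=
  ∑ j ∈ Finset.range n, X j ω

/-- The exit time `σ = inf {n : S_n = ±k}` of the walk from `(-k, k)`, valued in `ℕ∞`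
(with `inf ∅ = ⊤`). -/
noncomputable def exitTime {Ω : Type*} (X : ℕ → Ω → ℤ) (k : ℕ) (ω : Ω) : ℕ∞ :=
  sInf {t : ℕ∞ | ∃ m : ℕ, t = (m : ℕ∞) ∧ (walk X m ω = (k : ℤ) ∨ walk X m ω = -(k : ℤ))}

/-- `X` is a sequence of i.i.d. `±1`-valued steps with `P(X_i = 1) = p` and
`P(X_i = -1) = 1 - p`. -/
def IsBiasedWalkSteps {Ω : Type*} [MeasurableSpace Ω] (P : Measure Ω)
    (X : ℕ → Ω → ℤ) (p : ℝ) : Prop :=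
  (∀ i, Measurable (X i)) ∧
  iIndepFun X P ∧
  (∀ i, P {ω | X i ω = 1} = ENNReal.ofReal p) ∧
  (∀ i, P {ω | X i ω = -1} = ENNReal.ofReal (1 - p))


namespace RWAux

noncomputable def cnt (k : ℕ) : ℕ → ℤ → ℤ → ℝ
  | 0, y, m => if (y ≤ -(k:ℤ) ∨ (k:ℤ) ≤ y) ∨ m ≠ 0 then 0 else 1
  | n+1, y, m => if (y + m ≤ -(k:ℤ) ∨ (k:ℤ) ≤ y + m) then 0
      else cnt k n y (m-1) + cnt k n y (m+1)

lemma cnt_nonneg (k n : ℕ) (y m : ℤ) : 0 ≤ cnt k n y m := by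
  induction n generalizing y m with
  | zero => unfold cnt; split <;> norm_num
  | succ n ih =>
    unfold cnt; split
    · exact le_refl 0
    · exact add_nonneg (ih y (m-1)) (ih y (m+1))

lemma cnt_boundary (k n : ℕ) (y m : ℤ) (h : y ≤ -(k:ℤ) ∨ (k:ℤ) ≤ y) :
    cnt k n y m = 0 := by
  induction n generalizing m with
  | zero => unfold cnt; rw [if_pos (Or.inl h)]
  | succ n ih =>
    unfold cnt; split
    · rfl
    · rw [ih (m-1), ih (m+1), add_zero]

lemma cnt_big (k n : ℕ) (y m : ℤ) (h : (n:ℤ) < m ∨ m < -(n:ℤ)) : cnt k n y m = 0 := by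
  induction n generalizing m with
  | zero =>
    unfold cnt
    rw [if_pos (Or.inr (by omega))]
  | succ n ih =>
    unfold cnt; split
    · rfl
    · rw [ih (m-1) (by omega), ih (m+1) (by omega), add_zero]

lemma cnt_reflect (k n : ℕ) (y m : ℤ) : cnt k n (-y) (-m) = cnt k n y m := by
  induction n generalizing y m with
  | zero =>
    unfold cnt
    split <;> split <;> first | rfl | (exfalso; omega)
  | succ n ih =>
    unfold cnt
    split <;> split
    · rfl
    · exfalso; omega
    · exfalso; omega
    · have h1 : -m - 1 = -(m+1) := by ring
      have h2 : -m + 1 = -(m-1) := by ring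
      rw [h1, h2, ih y (m+1), ih y (m-1), add_comm]

lemma cnt_mono (k n : ℕ) (y m : ℤ) (hy : 0 ≤ y) (hm : 0 ≤ m) :
    cnt k n y m ≤ cnt k n y (-m) := by
  induction n generalizing m with
  | zero =>
    rcases eq_or_lt_of_le hm with h|h
    · rw [← h]; norm_num
    · unfold cnt
      rw [if_pos (Or.inr (by omega))]
      split <;> norm_num
  | succ n ih =>
    rcases eq_or_lt_of_le hm with h|h
    · rw [← h]; norm_num
    · unfold cnt
      split
      · split
        · exact le_refl 0
        · exact add_nonneg (cnt_nonneg k n y _) (cnt_nonneg k n y _)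
      · rename_i hg
        push_neg at hg
        have hg2 : ¬ (y + -m ≤ -(k:ℤ) ∨ (k:ℤ) ≤ y + -m) := by omega
        rw [if_neg hg2]
        have h1 : (-m - 1 : ℤ) = -(m+1) := by ring
        have h2 : (-m + 1 : ℤ) = -(m-1) := by ring
        rw [h1, h2]
        have A := ih (m-1) (by omega)
        have B := ih (m+1) (by omega)
        linarith


lemma cnt_firststep (k n : ℕ) (y m : ℤ) :
    cnt k (n+1) y m = if (y ≤ -(k:ℤ) ∨ (k:ℤ) ≤ y) then 0
      else cnt k n (y+1) (m-1) + cnt k n (y-1) (m+1) := by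
  induction n generalizing y m with
  | zero =>
    show (if (y + m ≤ -(k:ℤ) ∨ (k:ℤ) ≤ y + m) then 0
      else cnt k 0 y (m-1) + cnt k 0 y (m+1)) = _
    unfold cnt
    split_ifs <;> first | rfl | (exfalso; omega) | norm_num
  | succ n ih =>
    show (if (y + m ≤ -(k:ℤ) ∨ (k:ℤ) ≤ y + m) then 0
      else cnt k (n+1) y (m-1) + cnt k (n+1) y (m+1)) = _
    rw [ih y (m-1), ih y (m+1)]
    have ha : cnt k (n+1) (y+1) (m-1)
        = if (y + 1 + (m-1) ≤ -(k:ℤ) ∨ (k:ℤ) ≤ y + 1 + (m-1)) then 0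
          else cnt k n (y+1) (m-1-1) + cnt k n (y+1) (m-1+1) := rfl
    have hb : cnt k (n+1) (y-1) (m+1)
        = if (y - 1 + (m+1) ≤ -(k:ℤ) ∨ (k:ℤ) ≤ y - 1 + (m+1)) then 0
          else cnt k n (y-1) (m+1-1) + cnt k n (y-1) (m+1+1) := rfl
    rw [ha, hb]
    have g1 : (y + 1 + (m-1) ≤ -(k:ℤ) ∨ (k:ℤ) ≤ y + 1 + (m-1)) ↔
        (y + m ≤ -(k:ℤ) ∨ (k:ℤ) ≤ y + m) := by omega
    have g2 : (y - 1 + (m+1) ≤ -(k:ℤ) ∨ (k:ℤ) ≤ y - 1 + (m+1)) ↔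
        (y + m ≤ -(k:ℤ) ∨ (k:ℤ) ≤ y + m) := by omega
    by_cases H : (y + m ≤ -(k:ℤ) ∨ (k:ℤ) ≤ y + m) <;>
      by_cases H2 : (y ≤ -(k:ℤ) ∨ (k:ℤ) ≤ y)
    · rw [if_pos H, if_pos H2]
    · rw [if_pos H, if_neg H2, if_pos (g1.mpr H), if_pos (g2.mpr H)]
      norm_num
    · rw [if_neg H, if_pos H2, if_pos H2, if_pos H2]
      norm_num
    · rw [if_neg H, if_neg H2, if_neg H2, if_neg H2,
        if_neg (fun h => H (g1.mp h)), if_neg (fun h => H (g2.mp h))]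
      ring

noncomputable def fsur (k : ℕ) (p : ℝ) : ℕ → ℤ → ℝ
  | 0, x => if x ≤ -(k:ℤ) ∨ (k:ℤ) ≤ x then 0 else 1
  | n+1, x => if x ≤ -(k:ℤ) ∨ (k:ℤ) ≤ x then 0
      else p * fsur k p n (x+1) + (1-p) * fsur k p n (x-1)

lemma fsur_boundary (k : ℕ) (p : ℝ) (n : ℕ) (x : ℤ) (h : x ≤ -(k:ℤ) ∨ (k:ℤ) ≤ x) :
    fsur k p n x = 0 := by
  cases n <;> (unfold fsur; rw [if_pos h])

lemma fsur_expand (k : ℕ) (p : ℝ) (n : ℕ) (y : ℤ) :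
    fsur k p n y = ∑ u ∈ Finset.range (n+1),
      p^u * (1-p)^(n-u) * cnt k n y (2*(u:ℤ) - (n:ℕ)) := by
  induction n generalizing y with
  | zero =>
    rw [Finset.sum_range_one]
    have : (2 * ((0:ℕ):ℤ) - ((0:ℕ):ℤ)) = 0 := by norm_num
    rw [this, pow_zero, Nat.sub_zero, pow_zero, one_mul, one_mul]
    unfold fsur cnt
    split_ifs <;> first | rfl | (exfalso; omega) | norm_num
  | succ n ih =>
    have key : ∀ u : ℕ, cnt k (n+1) y (2*(u:ℤ) - ((n+1:ℕ):ℤ)) =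
        if (y ≤ -(k:ℤ) ∨ (k:ℤ) ≤ y) then 0
        else cnt k n (y+1) (2*(u:ℤ) - (n:ℕ) - 2) + cnt k n (y-1) (2*(u:ℤ) - (n:ℕ)) := by
      intro u
      rw [cnt_firststep,
        show (2*(u:ℤ) - ((n+1:ℕ):ℤ) - 1) = 2*(u:ℤ) - (n:ℕ) - 2 by push_cast; ring,
        show (2*(u:ℤ) - ((n+1:ℕ):ℤ) + 1) = 2*(u:ℤ) - (n:ℕ) by push_cast; ring]
    by_cases H : (y ≤ -(k:ℤ) ∨ (k:ℤ) ≤ y)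
    · rw [fsur_boundary k p _ y H]
      exact (Finset.sum_eq_zero (fun u _ => by rw [key u, if_pos H, mul_zero])).symm
    · have rhs1 : ∑ u ∈ Finset.range (n+1+1),
          p^u * (1-p)^(n+1-u) * cnt k (n+1) y (2*(u:ℤ) - ((n+1:ℕ):ℤ))
          = (∑ u ∈ Finset.range (n+2), p^u * (1-p)^(n+1-u) * cnt k n (y+1) (2*(u:ℤ) - (n:ℕ) - 2))
          + (∑ u ∈ Finset.range (n+2), p^u * (1-p)^(n+1-u) * cnt k n (y-1) (2*(u:ℤ) - (n:ℕ))) := by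
        rw [← Finset.sum_add_distrib]
        exact Finset.sum_congr rfl (fun u _ => by rw [key u, if_neg H]; ring)
      have s1 : (∑ u ∈ Finset.range (n+2), p^u * (1-p)^(n+1-u) * cnt k n (y+1) (2*(u:ℤ) - (n:ℕ) - 2))
          = p * ∑ u ∈ Finset.range (n+1), p^u * (1-p)^(n-u) * cnt k n (y+1) (2*(u:ℤ) - (n:ℕ)) := by
        rw [Finset.sum_range_succ' (fun u => p^u * (1-p)^(n+1-u) * cnt k n (y+1) (2*(u:ℤ) - (n:ℕ) - 2))]
        rw [cnt_big k n (y+1) (2*((0:ℕ):ℤ) - (n:ℕ) - 2) (by omega), mul_zero, add_zero,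
          Finset.mul_sum]
        refine Finset.sum_congr rfl (fun u hu => ?_)
        rw [show (2*(((u+1:ℕ)):ℤ) - (n:ℕ) - 2) = 2*(u:ℤ) - (n:ℕ) by push_cast; ring,
          show n+1-(u+1) = n-u by omega, pow_succ]
        ring
      have s2 : (∑ u ∈ Finset.range (n+2), p^u * (1-p)^(n+1-u) * cnt k n (y-1) (2*(u:ℤ) - (n:ℕ)))
          = (1-p) * ∑ u ∈ Finset.range (n+1), p^u * (1-p)^(n-u) * cnt k n (y-1) (2*(u:ℤ) - (n:ℕ)) := by
        rw [Finset.sum_range_succ]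
        rw [cnt_big k n (y-1) (2*(((n+1:ℕ)):ℤ) - (n:ℕ)) (by push_cast; omega), mul_zero, add_zero,
          Finset.mul_sum]
        refine Finset.sum_congr rfl (fun u hu => ?_)
        have hu' : u ≤ n := by simpa [Nat.lt_succ_iff] using hu
        rw [show n+1-u = (n-u)+1 by omega, pow_succ]
        ring
      rw [rhs1, s1, s2]
      unfold fsur
      rw [if_neg H, ih (y+1), ih (y-1)]


-- the key sign lemma : for p ≥ 1/2, starting right of center is worse
lemma fsur_R (k : ℕ) (p : ℝ) (hp : 1/2 ≤ p) (hp1 : p ≤ 1) (n : ℕ) (y : ℤ) (hy : 0 ≤ y) :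
    fsur k p n y ≤ fsur k p n (-y) := by
  have hq : 0 ≤ 1 - p := by linarith
  have hpq : 1 - p ≤ p := by linarith
  have hp0 : 0 ≤ p := by linarith
  rw [fsur_expand]
  have refl : ∀ u : ℕ, cnt k n (-y) (2*(u:ℤ) - (n:ℕ)) = cnt k n y ((n:ℕ) - 2*(u:ℤ)) := by
    intro u
    rw [show ((n:ℕ) - 2*(u:ℤ)) = -(2*(u:ℤ) - (n:ℕ)) by ring, ← cnt_reflect k n y]
    ring_nf
  have e2 : fsur k p n (-y) = ∑ u ∈ Finset.range (n+1),
      p^u * (1-p)^(n-u) * cnt k n y ((n:ℕ) - 2*(u:ℤ)) := by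
    rw [fsur_expand]
    exact Finset.sum_congr rfl (fun u _ => by rw [refl u])
  rw [e2]
  rw [← sub_nonpos, ← Finset.sum_sub_distrib]
  set F : ℕ → ℝ := fun u => p^u * (1-p)^(n-u) * cnt k n y (2*(u:ℤ) - (n:ℕ))
      - p^u * (1-p)^(n-u) * cnt k n y ((n:ℕ) - 2*(u:ℤ)) with hF
  have reflsum : ∑ u ∈ Finset.range (n+1), F u
      = ∑ u ∈ Finset.range (n+1), F (n - u) := by
    exact (Finset.sum_range_reflect F (n+1)).symm
  have each : ∀ u ∈ Finset.range (n+1), F u + F (n-u) ≤ 0 := by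
    intro u hu
    have hun : u ≤ n := by simpa [Nat.lt_succ_iff] using hu
    have hc1 : ((n:ℕ) - 2*((n-u:ℕ):ℤ)) = 2*(u:ℤ) - (n:ℕ) := by
      push_cast [Nat.cast_sub hun]; ring
    have hc2 : (2*((n-u:ℕ):ℤ) - (n:ℕ)) = (n:ℕ) - 2*(u:ℤ) := by
      push_cast [Nat.cast_sub hun]; ring
    have expand : F u + F (n-u) = (p^u * (1-p)^(n-u) - p^(n-u) * (1-p)^u)
        * (cnt k n y (2*(u:ℤ) - (n:ℕ)) - cnt k n y ((n:ℕ) - 2*(u:ℤ))) := by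
      rw [hF]
      simp only []
      rw [hc1, hc2, show n - (n-u) = u by omega]
      ring
    rw [expand]
    rcases le_or_gt (n:ℤ) (2*(u:ℤ)) with h2|h2
    · -- m := 2u - n ≥ 0 : weight factor ≥ 0, cnt factor ≤ 0
      apply mul_nonpos_of_nonneg_of_nonpos
      · have hw : p^(n-u) * (1-p)^u ≤ p^u * (1-p)^(n-u) := by
          have hun2 : n - u ≤ u := by omega
          calc p^(n-u) * (1-p)^u = p^(n-u) * (1-p)^(n-u) * (1-p)^(u-(n-u)) := by
                rw [mul_assoc, ← pow_add]; congr 2; omega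
            _ ≤ p^(n-u) * (1-p)^(n-u) * p^(u-(n-u)) := by
                apply mul_le_mul_of_nonneg_left (pow_le_pow_left₀ hq hpq _)
                positivity
            _ = p^u * (1-p)^(n-u) := by
                rw [show p^(n-u) * (1-p)^(n-u) * p^(u-(n-u)) = p^(n-u) * p^(u-(n-u)) * (1-p)^(n-u) by ring,
                  ← pow_add]
                congr 2; omega
        linarith
      · have := cnt_mono k n y (2*(u:ℤ) - (n:ℕ)) hy (by omega)
        rw [show (-(2*(u:ℤ) - (n:ℕ))) = ((n:ℕ) - 2*(u:ℤ)) by ring] at this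
        linarith
    · apply mul_nonpos_of_nonpos_of_nonneg
      · have hw : p^u * (1-p)^(n-u) ≤ p^(n-u) * (1-p)^u := by
          have hun2 : u ≤ n - u := by omega
          calc p^u * (1-p)^(n-u) = p^u * (1-p)^u * (1-p)^((n-u)-u) := by
                rw [mul_assoc, ← pow_add]; congr 2; omega
            _ ≤ p^u * (1-p)^u * p^((n-u)-u) := by
                apply mul_le_mul_of_nonneg_left (pow_le_pow_left₀ hq hpq _)
                positivity
            _ = p^(n-u) * (1-p)^u := by
                rw [show p^u * (1-p)^u * p^((n-u)-u) = p^u * p^((n-u)-u) * (1-p)^u by ring,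
                  ← pow_add]
                congr 2; omega
        linarith
      · have := cnt_mono k n y ((n:ℕ) - 2*(u:ℤ)) hy (by omega)
        rw [show (-((n:ℕ) - 2*(u:ℤ))) = (2*(u:ℤ) - (n:ℕ)) by ring] at this
        linarith
  have dbl : (2:ℝ) * ∑ u ∈ Finset.range (n+1), F u ≤ 0 := by
    have : (2:ℝ) * ∑ u ∈ Finset.range (n+1), F u
        = ∑ u ∈ Finset.range (n+1), (F u + F (n-u)) := by
      rw [Finset.sum_add_distrib, ← reflsum]; ring
    rw [this]
    exact Finset.sum_nonpos each
  linarith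

lemma fsur_flip (k : ℕ) (p : ℝ) (n : ℕ) (x : ℤ) :
    fsur k p n x = fsur k (1-p) n (-x) := by
  induction n generalizing x with
  | zero =>
    unfold fsur
    split_ifs <;> first | rfl | (exfalso; omega)
  | succ n ih =>
    unfold fsur
    split_ifs with h1 h2
    · rfl
    · exfalso; omega
    · exfalso; omega
    · rw [ih (x+1), ih (x-1), show (-(x+1)) = -x-1 by ring, show (-(x-1)) = -x+1 by ring,
        show (1-(1-p)) = p by ring]
      ring


/-- truncation of a weight to the open interval -/
noncomputable def wt (k : ℕ) (w : ℤ → ℝ) (x : ℤ) : ℝ :=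
  if x ≤ -(k:ℤ) ∨ (k:ℤ) ≤ x then 0 else w x

/-- admissible weight class -/
structure Adm (w : ℤ → ℝ) : Prop where
  sym : ∀ x, w (-x) = w x
  nn : ∀ x, 0 ≤ w x
  mono : ∀ z : ℤ, 0 ≤ z → w (z+2) ≤ w z

lemma wt_sym (k : ℕ) {w : ℤ → ℝ} (hw : Adm w) (x : ℤ) : wt k w (-x) = wt k w x := by
  unfold wt
  split_ifs <;> first | rfl | (exfalso; omega) | exact hw.sym x

lemma wt_nn (k : ℕ) {w : ℤ → ℝ} (hw : Adm w) (x : ℤ) : 0 ≤ wt k w x := by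
  unfold wt
  split_ifs
  · exact le_refl 0
  · exact hw.nn x

lemma wt_mono (k : ℕ) {w : ℤ → ℝ} (hw : Adm w) (z : ℤ) (hz : 0 ≤ z) :
    wt k w (z+2) ≤ wt k w z := by
  unfold wt
  split_ifs <;> first | exact le_refl 0 | (exfalso; omega) | exact hw.nn z | exact hw.mono z hz

/-- smoothed weight -/
noncomputable def ksm (k : ℕ) (w : ℤ → ℝ) (x : ℤ) : ℝ :=
  (wt k w (x-1) + wt k w (x+1)) / 2

lemma ksm_adm (k : ℕ) {w : ℤ → ℝ} (hw : Adm w) : Adm (ksm k w) := by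
  constructor
  · intro x
    unfold ksm
    rw [show (-x-1 : ℤ) = -(x+1) by ring, show (-x+1 : ℤ) = -(x-1) by ring,
      wt_sym k hw, wt_sym k hw, add_comm]
  · intro x
    unfold ksm
    have := wt_nn k hw (x-1); have := wt_nn k hw (x+1); linarith
  · intro z hz
    unfold ksm
    rcases eq_or_lt_of_le hz with h|h
    · rw [← h]
      have hs := wt_sym k hw 1
      have h1 := wt_mono k hw 1 (by norm_num)
      norm_num
      norm_num at hs h1
      linarith
    · have h1 := wt_mono k hw (z-1) (by omega)
      have h2 := wt_mono k hw (z+1) (by omega)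
      rw [show (z-1+2 : ℤ) = z+2-1 by ring] at h1
      rw [show (z+1+2 : ℤ) = z+2+1 by ring] at h2
      linarith

noncomputable def Phi (k : ℕ) (w : ℤ → ℝ) (p : ℝ) (n : ℕ) : ℝ :=
  ∑ x ∈ Finset.Icc (-(k:ℤ)) k, w x * fsur k p n x

/-- step identity -/
lemma Phi_step (k : ℕ) (w : ℤ → ℝ) (p : ℝ) (n : ℕ) :
    Phi k w p (n+1) = ∑ y ∈ Finset.Icc (-(k:ℤ)) k,
      (p * wt k w (y-1) + (1-p) * wt k w (y+1)) * fsur k p n y := by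
  unfold Phi
  -- restrict LHS to interior
  have hsub : Finset.Icc (-(k:ℤ)+1) ((k:ℤ)-1) ⊆ Finset.Icc (-(k:ℤ)) k := by
    intro x hx
    simp only [Finset.mem_Icc] at *
    omega
  rw [← Finset.sum_subset hsub (fun x hx hx2 => by
    rw [fsur_boundary k p (n+1) x (by simp only [Finset.mem_Icc] at *; omega), mul_zero])]
  -- apply recursion on interior
  have hrec : ∀ x ∈ Finset.Icc (-(k:ℤ)+1) ((k:ℤ)-1),
      w x * fsur k p (n+1) x = p * (w x * fsur k p n (x+1)) + (1-p) * (w x * fsur k p n (x-1)) := by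
    intro x hx
    simp only [Finset.mem_Icc] at hx
    show w x * (if x ≤ -(k:ℤ) ∨ (k:ℤ) ≤ x then 0
      else p * fsur k p n (x+1) + (1-p) * fsur k p n (x-1)) = _
    rw [if_neg (by omega)]
    ring
  rw [Finset.sum_congr rfl hrec, Finset.sum_add_distrib]
  -- two shifts
  have shift1 : ∑ x ∈ Finset.Icc (-(k:ℤ)+1) ((k:ℤ)-1), p * (w x * fsur k p n (x+1))
      = ∑ y ∈ Finset.Icc (-(k:ℤ)) k, p * wt k w (y-1) * fsur k p n y := by
    rw [show Finset.Icc (-(k:ℤ)+1) ((k:ℤ)-1) = (Finset.Icc (-(k:ℤ)+2) ((k:ℤ))).map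
        ⟨fun y => y - 1, (show Function.Injective (fun y : ℤ => y - 1) from fun a b h => by simpa using h)⟩ from ?_]
    · rw [Finset.sum_map]
      have hsub2 : Finset.Icc (-(k:ℤ)+2) ((k:ℤ)) ⊆ Finset.Icc (-(k:ℤ)) k := by
        intro x hx; simp only [Finset.mem_Icc] at *; omega
      rw [← Finset.sum_subset hsub2 (fun y hy hy2 => ?_)]
      · refine Finset.sum_congr rfl (fun y hy => ?_)
        simp only [Finset.mem_Icc, Function.Embedding.coeFn_mk] at *
        rw [show (y - 1 + 1) = y by ring]
        unfold wt
        rw [if_neg (by omega)]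
        ring
      · -- terms with y ∈ Icc(-k,k) \ Icc(-k+2,k) : y ≤ -k+1 : wt k w (y-1) = 0
        simp only [Finset.mem_Icc] at *
        unfold wt
        rcases le_or_gt y (-(k:ℤ)+1) with h|h
        · rw [if_pos (by omega)]; ring
        · exfalso; omega
    · ext y
      simp only [Finset.mem_Icc, Finset.mem_map, Function.Embedding.coeFn_mk, Finset.mem_Icc]
      constructor
      · intro h; exact ⟨y+1, by omega, by ring⟩
      · rintro ⟨a, ha, rfl⟩; omega
  have shift2 : ∑ x ∈ Finset.Icc (-(k:ℤ)+1) ((k:ℤ)-1), (1-p) * (w x * fsur k p n (x-1))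
      = ∑ y ∈ Finset.Icc (-(k:ℤ)) k, (1-p) * wt k w (y+1) * fsur k p n y := by
    rw [show Finset.Icc (-(k:ℤ)+1) ((k:ℤ)-1) = (Finset.Icc (-(k:ℤ)) ((k:ℤ)-2)).map
        ⟨fun y => y + 1, (show Function.Injective (fun y : ℤ => y + 1) from fun a b h => by simpa using h)⟩ from ?_]
    · rw [Finset.sum_map]
      have hsub2 : Finset.Icc (-(k:ℤ)) ((k:ℤ)-2) ⊆ Finset.Icc (-(k:ℤ)) k := by
        intro x hx; simp only [Finset.mem_Icc] at *; omega
      rw [← Finset.sum_subset hsub2 (fun y hy hy2 => ?_)]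
      · refine Finset.sum_congr rfl (fun y hy => ?_)
        simp only [Finset.mem_Icc, Function.Embedding.coeFn_mk] at *
        rw [show (y + 1 - 1) = y by ring]
        unfold wt
        rw [if_neg (by omega)]
        ring
      · simp only [Finset.mem_Icc] at *
        unfold wt
        rcases le_or_gt ((k:ℤ)-1) y with h|h
        · rw [if_pos (by omega)]; ring
        · exfalso; omega
    · ext y
      simp only [Finset.mem_Icc, Finset.mem_map, Function.Embedding.coeFn_mk, Finset.mem_Icc]
      constructor
      · intro h; exact ⟨y-1, by omega, by ring⟩
      · rintro ⟨a, ha, rfl⟩; omega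
  rw [shift1, shift2, ← Finset.sum_add_distrib]
  exact Finset.sum_congr rfl (fun y _ => by ring)

lemma Phi_main (k : ℕ) (p : ℝ) (hp : 1/2 ≤ p) (hp1 : p ≤ 1) (n : ℕ) :
    ∀ w : ℤ → ℝ, Adm w → Phi k w p n ≤ Phi k w (1/2) n := by
  induction n with
  | zero => intro w hw; exact le_of_eq rfl
  | succ n ih =>
    intro w hw
    rw [Phi_step, Phi_step]
    have half : ∀ y : ℤ, ((1:ℝ)/2 * wt k w (y-1) + (1-1/2) * wt k w (y+1))
        = ksm k w y := by
      intro y; unfold ksm; ring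
    have rhseq : ∑ y ∈ Finset.Icc (-(k:ℤ)) k,
        ((1:ℝ)/2 * wt k w (y-1) + (1-1/2) * wt k w (y+1)) * fsur k (1/2) n y
        = Phi k (ksm k w) (1/2) n := by
      unfold Phi
      exact Finset.sum_congr rfl (fun y _ => by rw [half y])
    rw [rhseq]
    -- LHS = Phi ksm p n + (p - 1/2) * T
    have lhseq : ∑ y ∈ Finset.Icc (-(k:ℤ)) k,
        (p * wt k w (y-1) + (1-p) * wt k w (y+1)) * fsur k p n y
        = Phi k (ksm k w) p n + (p - 1/2) *
          ∑ y ∈ Finset.Icc (-(k:ℤ)) k, (wt k w (y-1) - wt k w (y+1)) * fsur k p n y := by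
      unfold Phi
      rw [Finset.mul_sum, ← Finset.sum_add_distrib]
      refine Finset.sum_congr rfl (fun y _ => ?_)
      unfold ksm
      ring
    rw [lhseq]
    have hT : ∑ y ∈ Finset.Icc (-(k:ℤ)) k, (wt k w (y-1) - wt k w (y+1)) * fsur k p n y ≤ 0 := by
      set G : ℤ → ℝ := fun y => (wt k w (y-1) - wt k w (y+1)) * fsur k p n y with hG
      have reflsum : ∑ y ∈ Finset.Icc (-(k:ℤ)) k, G y = ∑ y ∈ Finset.Icc (-(k:ℤ)) k, G (-y) := by
        refine Finset.sum_nbij' (fun y => -y) (fun y => -y) ?_ ?_ ?_ ?_ ?_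
        · intro a ha; simp only [Finset.mem_Icc] at *; omega
        · intro a ha; simp only [Finset.mem_Icc] at *; omega
        · intro a _; ring
        · intro a _; ring
        · intro a _; rw [neg_neg]
      have each : ∀ y ∈ Finset.Icc (-(k:ℤ)) k, G y + G (-y) ≤ 0 := by
        intro y hy
        have hGneg : G (-y) = (wt k w (y+1) - wt k w (y-1)) * fsur k p n (-y) := by
          rw [hG]
          simp only []
          rw [show (-y-1 : ℤ) = -(y+1) by ring, show (-y+1 : ℤ) = -(y-1) by ring,
            wt_sym k hw, wt_sym k hw]
        have key : G y + G (-y) = (wt k w (y-1) - wt k w (y+1)) * (fsur k p n y - fsur k p n (-y)) := by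
          rw [hGneg, hG]; ring
        rw [key]
        rcases le_or_gt 0 y with h0|h0
        · apply mul_nonpos_of_nonneg_of_nonpos
          · rcases eq_or_lt_of_le h0 with h|h
            · rw [← h]
              rw [show ((0:ℤ)-1) = -(1:ℤ) by ring, wt_sym k hw]
              norm_num
            · have := wt_mono k hw (y-1) (by omega)
              rw [show (y-1+2 : ℤ) = y+1 by ring] at this
              linarith
          · have := fsur_R k p hp hp1 n y h0
            linarith
        · apply mul_nonpos_of_nonpos_of_nonneg
          · have := wt_mono k hw (-y-1) (by omega)
            rw [show (-y-1+2 : ℤ) = -(y-1) by ring, show (-y-1:ℤ) = -(y+1) by ring,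
              wt_sym k hw, wt_sym k hw] at this
            linarith
          · have := fsur_R k p hp hp1 n (-y) (by omega)
            rw [neg_neg] at this
            linarith
      have dbl : (2:ℝ) * ∑ y ∈ Finset.Icc (-(k:ℤ)) k, G y ≤ 0 := by
        have : (2:ℝ) * ∑ y ∈ Finset.Icc (-(k:ℤ)) k, G y
            = ∑ y ∈ Finset.Icc (-(k:ℤ)) k, (G y + G (-y)) := by
          rw [Finset.sum_add_distrib, ← reflsum]; ring
        rw [this]
        exact Finset.sum_nonpos each
      linarith
    have step1 : Phi k (ksm k w) p n + (p - 1/2) *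
        ∑ y ∈ Finset.Icc (-(k:ℤ)) k, (wt k w (y-1) - wt k w (y+1)) * fsur k p n y
        ≤ Phi k (ksm k w) p n := by
      nlinarith [hT, hp]
    exact step1.trans (ih (ksm k w) (ksm_adm k hw))

/-- the core inequality -/
lemma fsur_core (k : ℕ) (p : ℝ) (hp0 : 0 < p) (hp1 : p < 1) (n : ℕ) :
    fsur k p n 0 ≤ fsur k (1/2) n 0 := by
  -- wlog p ≥ 1/2
  have main : ∀ q : ℝ, 1/2 ≤ q → q ≤ 1 → fsur k q n 0 ≤ fsur k (1/2) n 0 := by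
    intro q hq hq1
    have delta : Adm (fun x : ℤ => if x = 0 then (1:ℝ) else 0) := by
      constructor
      · intro x; simp only [neg_eq_zero]
      · intro x; split_ifs <;> norm_num
      · intro z hz
        split_ifs <;> first | (exfalso; omega) | norm_num
    have happ := Phi_main k q hq hq1 n _ delta
    unfold Phi at happ
    have ev : ∀ r : ℝ, ∑ x ∈ Finset.Icc (-(k:ℤ)) k,
        (if x = 0 then (1:ℝ) else 0) * fsur k r n x = fsur k r n 0 := by
      intro r
      rw [Finset.sum_congr rfl (fun x _ => by
        rw [ite_mul, one_mul, zero_mul])]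
      rw [Finset.sum_ite_eq' (Finset.Icc (-(k:ℤ)) k) 0 (fun x => fsur k r n x)]
      rw [if_pos (by simp only [Finset.mem_Icc]; omega)]
    rw [ev q, ev (1/2)] at happ
    exact happ
  rcases le_or_gt (1/2) p with h|h
  · exact main p h (le_of_lt hp1)
  · have flip : fsur k p n 0 = fsur k (1-p) n 0 := by
      rw [fsur_flip k p n 0, neg_zero]
    rw [flip]
    exact main (1-p) (by linarith) (by linarith)


def bval (b : Bool) : ℤ := cond b 1 (-1)
def wB (p : ℝ) (b : Bool) : ℝ := cond b p (1-p)
def psum {n : ℕ} (ε : Fin n → Bool) (m : ℕ) : ℤ :=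
  ∑ i : Fin n, if (i:ℕ) < m then bval (ε i) else 0
def GoodX (k n : ℕ) (x : ℤ) : Finset (Fin n → Bool) :=
  Finset.univ.filter
    (fun ε => ∀ m ≤ n, x + psum ε m ≠ (k:ℤ) ∧ x + psum ε m ≠ -(k:ℤ))
def bext {n : ℕ} (ε : Fin n → Bool) (i : ℕ) : ℤ :=
  if h : i < n then bval (ε ⟨i, h⟩) else 1

lemma wB_nonneg {p : ℝ} (hp0 : 0 ≤ p) (hp1 : p ≤ 1) (b : Bool) : 0 ≤ wB p b := by
  cases b
  · show (0:ℝ) ≤ 1 - p; linarith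
  · exact hp0

lemma psum_eq {n : ℕ} (ε : Fin n → Bool) (m : ℕ) (hm : m ≤ n) :
    psum ε m = ∑ j ∈ Finset.range m, bext ε j := by
  unfold psum
  have e1 : ∀ i : Fin n, (if (i:ℕ) < m then bval (ε i) else 0)
      = (fun j => if j < m then bext ε j else 0) (i : ℕ) := by
    intro i
    simp only [bext, dif_pos i.isLt]
  rw [Finset.sum_congr rfl (fun i _ => e1 i),
    Fin.sum_univ_eq_sum_range (fun j => if j < m then bext ε j else 0) n]
  have e2 : Finset.range m = (Finset.range n).filter (fun j => j < m) := by
    ext j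
    simp only [Finset.mem_range, Finset.mem_filter]
    omega
  rw [e2, Finset.sum_filter]



lemma psum_zero {n : ℕ} (ε : Fin n → Bool) : psum ε 0 = 0 := by
  unfold psum; simp

lemma psum_cons {n : ℕ} (b : Bool) (ε : Fin n → Bool) (m : ℕ) :
    psum (Fin.cons b ε) (m+1) = bval b + psum ε m := by
  unfold psum
  rw [Fin.sum_univ_succ]
  simp only [Fin.cons_zero, Fin.cons_succ, Fin.val_zero, Fin.val_succ]
  rw [if_pos (Nat.succ_pos m)]
  congr 1
  exact Finset.sum_congr rfl (fun i _ => by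
    congr 1
    simp [Nat.succ_lt_succ_iff])

lemma TT_eq_fsur (k : ℕ) (p : ℝ) (n : ℕ) : ∀ x : ℤ, -(k:ℤ) ≤ x → x ≤ (k:ℤ) →
    ∑ ε ∈ GoodX k n x, ∏ i : Fin n, wB p (ε i) = fsur k p n x := by
  induction n with
  | zero =>
    intro x hx1 hx2
    unfold GoodX
    rw [Finset.sum_filter]
    rw [Fintype.sum_unique]
    simp only [Nat.le_zero, forall_eq, psum_zero, add_zero, Finset.univ_eq_empty,
      Finset.prod_empty]
    unfold fsur
    split_ifs <;> first | rfl | (exfalso; omega)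
  | succ n ih =>
    intro x hx1 hx2
    unfold GoodX
    rw [Finset.sum_filter]
    rw [← Fintype.sum_equiv (Fin.consEquiv (fun _ : Fin (n+1) => Bool))
      (fun z => if (∀ m ≤ n+1, x + psum (Fin.cons z.1 z.2) m ≠ (k:ℤ) ∧
          x + psum (Fin.cons z.1 z.2) m ≠ -(k:ℤ))
        then ∏ i : Fin (n+1), wB p ((Fin.cons z.1 z.2 : Fin (n+1) → Bool) i) else 0)
      _ (fun z => by simp [Fin.consEquiv]; congr)]
    by_cases Hx : x = (k:ℤ) ∨ x = -(k:ℤ)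
    · have bd : fsur k p (n+1) x = 0 := by
        cases n <;> (unfold fsur; rw [if_pos (by omega)])
      rw [bd]
      apply Finset.sum_eq_zero
      intro z _
      rw [if_neg]
      intro hcon
      have h0 := hcon 0 (Nat.zero_le _)
      rw [psum_zero, add_zero] at h0
      tauto
    · -- interior
      push_neg at Hx
      have goodiff : ∀ (b : Bool) (ε : Fin n → Bool),
          (∀ m ≤ n+1, x + psum (Fin.cons b ε) m ≠ (k:ℤ) ∧ x + psum (Fin.cons b ε) m ≠ -(k:ℤ))
          ↔ (∀ m ≤ n, (x + bval b) + psum ε m ≠ (k:ℤ) ∧ (x + bval b) + psum ε m ≠ -(k:ℤ)) := by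
        intro b ε
        constructor
        · intro h m hm
          have := h (m+1) (by omega)
          rw [psum_cons] at this
          rw [show (x + bval b) + psum ε m = x + (bval b + psum ε m) by ring]
          exact this
        · intro h m hm
          cases m with
          | zero =>
            rw [psum_zero, add_zero]
            exact ⟨Hx.1, Hx.2⟩
          | succ m' =>
            rw [psum_cons, show x + (bval b + psum ε m') = (x + bval b) + psum ε m' by ring]
            exact h m' (by omega)
      rw [Fintype.sum_prod_type]
      have inner : ∀ b : Bool,
          (∑ ε : Fin n → Bool, if (∀ m ≤ n+1, x + psum (Fin.cons b ε) m ≠ (k:ℤ) ∧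
            x + psum (Fin.cons b ε) m ≠ -(k:ℤ))
            then ∏ i : Fin (n+1), wB p ((Fin.cons b ε : Fin (n+1) → Bool) i) else 0)
          = wB p b * fsur k p n (x + bval b) := by
        intro b
        have hbv : -(k:ℤ) ≤ x + bval b ∧ x + bval b ≤ (k:ℤ) := by
          unfold bval; cases b <;> simp <;> omega
        rw [← ih (x + bval b) hbv.1 hbv.2]
        unfold GoodX
        rw [Finset.sum_filter, Finset.mul_sum]
        refine Fintype.sum_congr _ _ (fun ε => ?_)
        rw [Fin.prod_univ_succ]
        simp only [Fin.cons_zero, Fin.cons_succ]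
        rw [if_congr (goodiff b ε) rfl rfl]
        split_ifs
        · rfl
        · rw [mul_zero]
      rw [Fintype.sum_bool]
      rw [inner true, inner false]
      have hrec : fsur k p (n+1) x = p * fsur k p n (x+1) + (1-p) * fsur k p n (x-1) := by
        show (if x ≤ -(k:ℤ) ∨ (k:ℤ) ≤ x then (0:ℝ)
          else p * fsur k p n (x+1) + (1-p) * fsur k p n (x-1)) = _
        rw [if_neg (by omega)]
      have e1 : wB p true = p := rfl
      have e2 : wB p false = 1 - p := rfl
      have e3 : bval true = (1:ℤ) := rfl
      have e4 : bval false = (-1:ℤ) := rfl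
      rw [e1, e2, e3, e4, show x + (-1:ℤ) = x - 1 by ring, show x + (1:ℤ) = x + 1 by ring, hrec]


/-- the exit-time event in elementary form -/
lemma event_eq {Ω : Type*} (X : ℕ → Ω → ℤ) (k n : ℕ) :
    {ω | (n : ℕ∞) < exitTime X k ω}
      = {ω | ∀ m ≤ n, walk X m ω ≠ (k:ℤ) ∧ walk X m ω ≠ -(k:ℤ)} := by
  ext ω
  simp only [Set.mem_setOf_eq]
  constructor
  · intro h m hm
    refine ⟨fun hc => ?_, fun hc => ?_⟩
    · have hmem : (m : ℕ∞) ∈ {t : ℕ∞ | ∃ m' : ℕ, t = (m' : ℕ∞) ∧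
          (walk X m' ω = (k:ℤ) ∨ walk X m' ω = -(k:ℤ))} := ⟨m, rfl, Or.inl hc⟩
      have hlt : (n : ℕ∞) < (m : ℕ∞) := lt_of_lt_of_le h (sInf_le hmem)
      rw [Nat.cast_lt] at hlt
      omega
    · have hmem : (m : ℕ∞) ∈ {t : ℕ∞ | ∃ m' : ℕ, t = (m' : ℕ∞) ∧
          (walk X m' ω = (k:ℤ) ∨ walk X m' ω = -(k:ℤ))} := ⟨m, rfl, Or.inr hc⟩
      have hlt : (n : ℕ∞) < (m : ℕ∞) := lt_of_lt_of_le h (sInf_le hmem)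
      rw [Nat.cast_lt] at hlt
      omega
  · intro h
    have hle : ((n+1 : ℕ) : ℕ∞) ≤ exitTime X k ω := by
      apply le_sInf
      rintro t ⟨m, rfl, hm⟩
      rw [Nat.cast_le]
      by_contra hc
      push_neg at hc
      have := h m (by omega)
      tauto
    calc (n : ℕ∞) < ((n+1 : ℕ) : ℕ∞) := by rw [Nat.cast_lt]; omega
      _ ≤ _ := hle

section Meas

variable {Ω : Type*} [MeasurableSpace Ω] (P : Measure Ω) [IsProbabilityMeasure P]

lemma prob_eq (X : ℕ → Ω → ℤ) (p : ℝ) (hp0 : 0 ≤ p) (hp1 : p ≤ 1)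
    (hmeas : ∀ i, Measurable (X i))
    (hind : iIndepFun X P)
    (h1 : ∀ i, P {ω | X i ω = 1} = ENNReal.ofReal p)
    (h2 : ∀ i, P {ω | X i ω = -1} = ENNReal.ofReal (1 - p))
    (k n : ℕ) :
    P {ω | ∀ m ≤ n, walk X m ω ≠ (k:ℤ) ∧ walk X m ω ≠ -(k:ℤ)}
      = ENNReal.ofReal (∑ ε ∈ GoodX k n 0, ∏ i : Fin n, wB p (ε i)) := by
  classical
  set A := {ω | ∀ m ≤ n, walk X m ω ≠ (k:ℤ) ∧ walk X m ω ≠ -(k:ℤ)} with hA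
  set E : (Fin n → Bool) → Set Ω :=
    fun ε => ⋂ i ∈ Finset.range n, X i ⁻¹' {bext ε i} with hE
  have hEmeas : ∀ ε, MeasurableSet (E ε) := by
    intro ε
    apply Finset.measurableSet_biInter
    intro i _
    exact hmeas i (measurableSet_singleton _)
  have hPE : ∀ ε, P (E ε) = ∏ i : Fin n, ENNReal.ofReal (wB p (ε i)) := by
    intro ε
    have key := hind.measure_inter_preimage_eq_mul (S := Finset.range n)
      (sets := fun i => {bext ε i}) (fun i _ => measurableSet_singleton _)
    rw [hE]
    simp only []
    rw [key, ← Fin.prod_univ_eq_prod_range (fun i => P (X i ⁻¹' {bext ε i})) n]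
    refine Finset.prod_congr rfl (fun i _ => ?_)
    have hb : bext ε (i : ℕ) = bval (ε i) := by
      simp only [bext, dif_pos i.isLt]
    rw [hb]
    cases hεi : ε i
    · show P (X (i:ℕ) ⁻¹' {-1}) = _
      have hset : X (i:ℕ) ⁻¹' {-1} = {ω | X (i:ℕ) ω = -1} := rfl
      rw [hset, h2]
      rfl
    · show P (X (i:ℕ) ⁻¹' {1}) = _
      have hset : X (i:ℕ) ⁻¹' {1} = {ω | X (i:ℕ) ω = 1} := rfl
      rw [hset, h1]
      rfl
  have hXval : ∀ ε : Fin n → Bool, ∀ ω, ω ∈ E ε → ∀ j < n, X j ω = bext ε j := by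
    intro ε ω hω j hj
    exact Set.mem_iInter₂.mp hω j (by simp only [Finset.mem_range]; omega)
  have hdisj : (↑(Finset.univ : Finset (Fin n → Bool)) : Set (Fin n → Bool)).PairwiseDisjoint E := by
    intro ε _ ε' _ hne
    obtain ⟨i, hi⟩ := Function.ne_iff.mp hne
    simp only [Function.onFun]
    rw [Set.disjoint_left]
    intro ω hω hω'
    have m1 := hXval ε ω hω (i:ℕ) i.isLt
    have m2 := hXval ε' ω hω' (i:ℕ) i.isLt
    simp only [bext, dif_pos i.isLt] at m1 m2
    rw [m1] at m2
    apply hi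
    revert m2
    simp only [Fin.eta]
    cases ε i <;> cases ε' i <;> simp [bval]
  have hU : P (⋃ ε ∈ (Finset.univ : Finset (Fin n → Bool)), E ε) = 1 := by
    rw [measure_biUnion_finset hdisj (fun ε _ => hEmeas ε)]
    rw [Finset.sum_congr rfl (fun ε _ => hPE ε)]
    rw [← Fintype.piFinset_univ, ← Finset.prod_univ_sum
      (t := fun _ : Fin n => (Finset.univ : Finset Bool))
      (f := fun _ b => ENNReal.ofReal (wB p b))]
    have hone : ∀ i : Fin n, ∑ b : Bool, ENNReal.ofReal (wB p b) = 1 := by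
      intro i
      rw [Fintype.sum_bool]
      show ENNReal.ofReal p + ENNReal.ofReal (1-p) = 1
      rw [← ENNReal.ofReal_add hp0 (by linarith), show p + (1-p) = 1 by ring,
        ENNReal.ofReal_one]
    rw [Finset.prod_congr rfl (fun i _ => hone i), Finset.prod_const_one]
  -- walk values on E ε
  have hwalk : ∀ ε : Fin n → Bool, ∀ ω ∈ E ε, ∀ m, m ≤ n → walk X m ω = psum ε m := by
    intro ε ω hω m hm
    unfold walk
    rw [psum_eq ε m hm]
    exact Finset.sum_congr rfl (fun j hj => hXval ε ω hω j
      (by simp only [Finset.mem_range] at hj; omega))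
  -- dichotomy
  have hdich : ∀ ε : Fin n → Bool, A ∩ E ε = if ε ∈ GoodX k n 0 then E ε else ∅ := by
    intro ε
    split_ifs with hg
    · apply Set.inter_eq_self_of_subset_right
      intro ω hω
      rw [hA]
      simp only [Set.mem_setOf_eq]
      intro m hm
      rw [hwalk ε ω hω m hm]
      simp only [GoodX, Finset.mem_filter] at hg
      have := hg.2 m hm
      rw [zero_add] at this
      exact this
    · ext ω
      simp only [Set.mem_inter_iff, Set.mem_empty_iff_false, iff_false, not_and]
      intro hωA hωE
      simp only [GoodX, Finset.mem_filter, Finset.mem_univ, true_and] at hg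
      push_neg at hg
      obtain ⟨m, hm, hbad⟩ := hg
      rw [hA] at hωA
      simp only [Set.mem_setOf_eq] at hωA
      have := hωA m hm
      rw [hwalk ε ω hωE m hm] at this
      rw [zero_add] at hbad
      tauto
  -- P A = sum over good
  set U := ⋃ ε ∈ (Finset.univ : Finset (Fin n → Bool)), E ε with hUdef
  have hUmeas : MeasurableSet U := by
    apply Finset.measurableSet_biUnion
    intro ε _
    exact hEmeas ε
  have hPAU : P A = P (A ∩ U) := by
    have hsplit := measure_inter_add_diff (μ := P) A hUmeas
    have hcompl : P (A \ U) = 0 := by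
      have hsub : A \ U ⊆ Uᶜ := fun ω hω => hω.2
      have : P Uᶜ = 0 := by
        rw [measure_compl hUmeas (measure_ne_top P U), hU, measure_univ, tsub_self]
      exact le_antisymm (le_trans (measure_mono hsub) this.le) (by positivity)
    rw [← hsplit, hcompl, add_zero]
  have hAU : A ∩ U = ⋃ ε ∈ GoodX k n 0, E ε := by
    rw [hUdef, Set.inter_iUnion₂]
    ext ω
    simp only [Set.mem_iUnion, exists_prop]
    constructor
    · rintro ⟨ε, _, hω⟩
      rw [hdich ε] at hω
      split_ifs at hω with hg
      · exact ⟨ε, hg, hω⟩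
      · exact absurd hω (Set.notMem_empty ω)
    · rintro ⟨ε, hg, hω⟩
      refine ⟨ε, Finset.mem_univ ε, ?_⟩
      rw [hdich ε, if_pos hg]
      exact hω
  rw [hPAU, hAU]
  rw [measure_biUnion_finset (hdisj.subset (by intro ε _; exact Finset.mem_coe.mpr (Finset.mem_univ ε)))
    (fun ε _ => hEmeas ε)]
  rw [Finset.sum_congr rfl (fun ε _ => hPE ε)]
  rw [ENNReal.ofReal_sum_of_nonneg (fun ε _ => Finset.prod_nonneg
    (fun i _ => wB_nonneg hp0 hp1 (ε i)))]
  refine Finset.sum_congr rfl (fun ε _ => ?_)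
  rw [ENNReal.ofReal_prod_of_nonneg (fun i _ => wB_nonneg hp0 hp1 (ε i))]

end Meas


end RWAux

/-- The exit time of simple random walk from `(-k, k)` is stochastically
maximized by the unbiased walk: for every `p ∈ (0,1)` and every `n`,
`ℙ(σ_p^k > n) ≤ ℙ(σ_{1/2}^k > n)`. -/
theorem rw_exit_time_maximized_at_half
    {Ω₁ Ω₂ : Type*} [MeasurableSpace Ω₁] [MeasurableSpace Ω₂]
    (P : Measure Ω₁) (Phalf : Measure Ω₂)
    [IsProbabilityMeasure P] [IsProbabilityMeasure Phalf]
    {p : ℝ} (h0 : 0 < p) (h1 : p < 1)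
    (X : ℕ → Ω₁ → ℤ) (Y : ℕ → Ω₂ → ℤ)
    (hX : IsBiasedWalkSteps P X p) (hY : IsBiasedWalkSteps Phalf Y (1 / 2))
    (k : ℕ) (hk : 0 < k) (n : ℕ) :
    P {ω | (n : ℕ∞) < exitTime X k ω} ≤ Phalf {ω | (n : ℕ∞) < exitTime Y k ω} := by
  obtain ⟨hmX, hiX, h1X, h2X⟩ := hX
  obtain ⟨hmY, hiY, h1Y, h2Y⟩ := hY
  rw [RWAux.event_eq X k n, RWAux.event_eq Y k n,
    RWAux.prob_eq P X p (le_of_lt h0) (le_of_lt h1) hmX hiX h1X h2X k n,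
    RWAux.prob_eq Phalf Y (1/2) (by norm_num) (by norm_num) hmY hiY h1Y h2Y k n]
  apply ENNReal.ofReal_le_ofReal
  rw [RWAux.TT_eq_fsur k p n 0 (by omega) (by omega),
    RWAux.TT_eq_fsur k (1/2) n 0 (by omega) (by omega)]
  exact RWAux.fsur_core k p h0 h1 n
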